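/- Let G be a graph with m edges. Then the energy E of G satisfies E ≥ 2√m. -/

import Mathlib

open Matrix Finset

lemma my_trace_eq_sum_eigs {n : Type*} [Fintype n] [DecidableEq n] {A : Matrix n n ℝ}
    (hA : A.IsHermitian) : A.trace = ∑ i, hA.eigenvalues i := by
  conv_lhs => rw [hA.spectral_theorem]
  rw [Unitary.conjStarAlgAut_apply]
  rw [Matrix.trace_mul_cycle, Matrix.UnitaryGroup.star_mul_self, one_mul, Matrix.trace_diagonal]
  simp

lemma my_trace_sq_eq_sum_eigs {n : Type*} [Fintype n] [DecidableEq n] {A : Matrix n n ℝ}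
    (hA : A.IsHermitian) : (A * A).trace = ∑ i, (hA.eigenvalues i) ^ 2 := by
  set U := (hA.eigenvectorUnitary : Matrix n n ℝ)
  set D := Matrix.diagonal (RCLike.ofReal ∘ hA.eigenvalues : n → ℝ)
  have hU : star U * U = 1 := Matrix.UnitaryGroup.star_mul_self _
  have h1 : A * A = U * (D * D) * star U := by
    conv_lhs => rw [hA.spectral_theorem]
    calc U * D * star U * (U * D * star U)
        = U * (D * ((star U * U) * (D * star U))) := by noncomm_ring
      _ = U * (D * D) * star U := by rw [hU]; noncomm_ring
  rw [h1, Matrix.trace_mul_cycle, hU, one_mul]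
  have : D * D = Matrix.diagonal (fun i => (hA.eigenvalues i)^2) := by
    rw [Matrix.diagonal_mul_diagonal]
    funext i; simp [sq]
  rw [this, Matrix.trace_diagonal]

theorem caporossi_lower_bound {V : Type*} [Fintype V] [DecidableEq V]
    (G : SimpleGraph V) [DecidableRel G.Adj]
    (hA : (G.adjMatrix ℝ).IsHermitian) :
    (∑ i, |hA.eigenvalues i|) ≥ 2 * Real.sqrt G.edgeFinset.card := by
  set l := hA.eigenvalues with hl
  set m : ℝ := (G.edgeFinset.card : ℝ)
  have hm0 : 0 ≤ m := by positivity
  have hs : ∑ i, l i = 0 := by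
    rw [← my_trace_eq_sum_eigs hA, SimpleGraph.trace_adjMatrix]
  have hq : ∑ i, (l i) ^ 2 = 2 * m := by
    rw [← my_trace_sq_eq_sum_eigs hA]
    rw [Matrix.trace]
    simp only [Matrix.diag_apply, SimpleGraph.adjMatrix_mul_self_apply_self]
    rw [← Nat.cast_sum, G.sum_degrees_eq_twice_card_edges, Nat.cast_mul, Nat.cast_ofNat]
  set q : ℝ := ∑ i, (l i) ^ 2 with hqdef
  have hq0 : 0 ≤ q := Finset.sum_nonneg fun i _ => sq_nonneg _
  have split : ∀ f : V → ℝ, ∑ i, ∑ j, f i * f j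
      = (∑ i, (f i) ^ 2) + ∑ i, ∑ j ∈ Finset.univ.erase i, f i * f j := by
    intro f
    rw [← Finset.sum_add_distrib]
    refine Finset.sum_congr rfl fun i _ => ?_
    rw [← Finset.add_sum_erase _ _ (Finset.mem_univ i), sq]
  have habs : ∑ i, (|l i|) ^ 2 = q := by
    simp [sq_abs, hqdef]
  have hP : ∑ i, ∑ j ∈ Finset.univ.erase i, l i * l j = -q := by
    have h0 : (0:ℝ) = ∑ i, ∑ j, l i * l j := by
      rw [← Finset.sum_mul_sum, hs, zero_mul]
    rw [split l] at h0
    linarith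
  have hPabs : q ≤ ∑ i, ∑ j ∈ Finset.univ.erase i, |l i| * |l j| := by
    calc q = |∑ i, ∑ j ∈ Finset.univ.erase i, l i * l j| := by
            rw [hP, abs_neg, abs_of_nonneg hq0]
      _ ≤ ∑ i, |∑ j ∈ Finset.univ.erase i, l i * l j| :=
            Finset.abs_sum_le_sum_abs _ _
      _ ≤ ∑ i, ∑ j ∈ Finset.univ.erase i, |l i| * |l j| := by
            refine Finset.sum_le_sum fun i _ => ?_
            refine (Finset.abs_sum_le_sum_abs _ _).trans ?_
            refine Finset.sum_le_sum fun j _ => ?_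
            rw [abs_mul]
  have key : 4 * m ≤ (∑ i, |l i|) ^ 2 := by
    have e1 : (∑ i, |l i|) ^ 2 = ∑ i, ∑ j, |l i| * |l j| := by
      rw [sq, Finset.sum_mul_sum]
    rw [e1, split (fun i => |l i|), habs]
    linarith
  have hE0 : 0 ≤ ∑ i, |l i| := Finset.sum_nonneg fun i _ => abs_nonneg _
  calc 2 * Real.sqrt m = Real.sqrt (4 * m) := by
        rw [show (4:ℝ) * m = 2^2 * m by ring, Real.sqrt_mul (by positivity),
          Real.sqrt_sq (by norm_num)]
    _ ≤ Real.sqrt ((∑ i, |l i|) ^ 2) := Real.sqrt_le_sqrt key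
    _ = ∑ i, |l i| := Real.sqrt_sq hE0
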